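/- Every finite group in which the word w_o is a law (w_o(x,y)=1 for all x,y) is abelian. -/

import Mathlib

open scoped commutatorElement

/-- The auxiliary word `v(x,y) = [[x^d, y^d]^d, [y^d, x^{-d}]^d]`. -/
def vWord {G : Type*} [Group G] (d : ℕ) (x y : G) : G :=
  ⁅⁅x ^ d, y ^ d⁆ ^ d, ⁅y ^ d, (x⁻¹) ^ d⁆ ^ d⁆

/-- The signs `ε_i` in Olshanskii's word, with `ε_0 = 1`. -/
def eps (i : ℕ) : ℤ :=
  if i = 0 ∨ i % 10 = 1 ∨ i % 10 = 2 ∨ i % 10 = 3 ∨ i % 10 = 5 ∨ i % 10 = 6 then 1 else -1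

/-- Olshanskii's word
`w_o(x,y) = [x,y] v(x,y)^n [x,y]^{ε_1} v(x,y)^{n+1} ⋯ [x,y]^{ε_{h-1}} v(x,y)^{n+h-1}`. -/
def wo {G : Type*} [Group G] (d n h : ℕ) (x y : G) : G :=
  ((List.range h).map fun i => ⁅x, y⁆ ^ eps i * vWord d x y ^ (n + i)).prod

/-- The set of `w_o`-values in `G`. -/
def woValues (G : Type*) [Group G] (d n h : ℕ) : Set G :=
  {g : G | ∃ x y : G, wo d n h x y = g}

open Pointwise MulAction

lemma eps_one {i : ℕ} (h : i % 10 = 1 ∨ i % 10 = 2 ∨ i % 10 = 3 ∨ i % 10 = 5 ∨ i % 10 = 6) :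
    eps i = 1 := if_pos (Or.inr h)

lemma eps_neg {i : ℕ} (h0 : i ≠ 0)
    (h : i % 10 = 0 ∨ i % 10 = 4 ∨ i % 10 = 7 ∨ i % 10 = 8 ∨ i % 10 = 9) :
    eps i = -1 := if_neg (by omega)

lemma eps_sum_block (m : ℕ) : ∑ i ∈ Finset.range (10 * m + 1), eps i = 1 := by
  induction m with
  | zero => simp [eps]
  | succ m ih =>
      have h11 : 10 * (m + 1) + 1 = (10 * m + 1) + 10 := by ring
      rw [h11]
      rw [Finset.sum_range_succ, Finset.sum_range_succ, Finset.sum_range_succ,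
        Finset.sum_range_succ, Finset.sum_range_succ, Finset.sum_range_succ,
        Finset.sum_range_succ, Finset.sum_range_succ, Finset.sum_range_succ,
        Finset.sum_range_succ, ih]
      rw [eps_one (by omega), eps_one (by omega), eps_one (by omega),
        eps_neg (by omega) (by omega), eps_one (by omega), eps_one (by omega),
        eps_neg (by omega) (by omega), eps_neg (by omega) (by omega),
        eps_neg (by omega) (by omega), eps_neg (by omega) (by omega)]
      ring

lemma eps_sum {h : ℕ} (hh : h % 10 = 1) : ∑ i ∈ Finset.range h, eps i = 1 := by
  obtain ⟨m, rfl⟩ : ∃ m, h = 10 * m + 1 := ⟨h / 10, by omega⟩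
  exact eps_sum_block m

lemma prod_zpow_eps {G : Type*} [Group G] (c : G) (l : List ℕ) :
    (l.map fun i => c ^ eps i).prod = c ^ (l.map eps).sum := by
  induction l with
  | nil => simp
  | cons a l ih => simp [ih, zpow_add]

lemma list_sum_range_eps (h : ℕ) : ((List.range h).map eps).sum = ∑ i ∈ Finset.range h, eps i := by
  induction h with
  | zero => simp
  | succ h ih => rw [List.range_succ, Finset.sum_range_succ, List.map_append, List.sum_append, ih]; simp

lemma vWord_map {G H : Type*} [Group G] [Group H] (f : G →* H) (d : ℕ) (x y : G) :
    f (vWord d x y) = vWord d (f x) (f y) := by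
  simp [vWord, map_commutatorElement, map_pow]

lemma wo_map {G H : Type*} [Group G] [Group H] (f : G →* H) (d n h : ℕ) (x y : G) :
    f (wo d n h x y) = wo d n h (f x) (f y) := by
  rw [wo, wo, map_list_prod f, List.map_map]
  congr 1
  apply List.map_congr_left
  intro i _
  simp [map_mul, map_zpow, map_pow, map_commutatorElement, vWord_map]

lemma law_subgroup {G : Type*} [Group G] (d n h : ℕ)
    (hlaw : ∀ x y : G, wo d n h x y = 1) (H : Subgroup G) :
    ∀ x y : H, wo d n h x y = 1 := by
  intro x y
  have := wo_map H.subtype d n h x y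
  apply Subtype.ext
  simpa [hlaw] using this

lemma law_quotient {G : Type*} [Group G] (d n h : ℕ)
    (hlaw : ∀ x y : G, wo d n h x y = 1) (N : Subgroup G) [N.Normal] :
    ∀ x y : G ⧸ N, wo d n h x y = 1 := by
  intro x y
  obtain ⟨a, rfl⟩ := QuotientGroup.mk'_surjective N x
  obtain ⟨b, rfl⟩ := QuotientGroup.mk'_surjective N y
  rw [← wo_map, hlaw, map_one]

lemma abelian_of_metabelian {G : Type*} [Group G] (d n h : ℕ) (hh : h % 10 = 1)
    (hcomm : ∀ a b : G, a ∈ commutator G → b ∈ commutator G → a * b = b * a)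
    (hlaw : ∀ x y : G, wo d n h x y = 1) : ∀ x y : G, x * y = y * x := by
  intro x y
  have hA : ⁅x ^ d, y ^ d⁆ ∈ commutator G := by
    rw [commutator_def]
    exact Subgroup.commutator_mem_commutator (Subgroup.mem_top _) (Subgroup.mem_top _)
  have hB : ⁅y ^ d, (x⁻¹) ^ d⁆ ∈ commutator G := by
    rw [commutator_def]
    exact Subgroup.commutator_mem_commutator (Subgroup.mem_top _) (Subgroup.mem_top _)
  have hv : vWord d x y = 1 := by
    rw [vWord, commutatorElement_eq_one_iff_mul_comm]
    exact hcomm _ _ (Subgroup.pow_mem _ hA d) (Subgroup.pow_mem _ hB d)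
  have hw := hlaw x y
  rw [wo, hv] at hw
  simp only [one_pow, mul_one] at hw
  rw [prod_zpow_eps, list_sum_range_eps, eps_sum hh, zpow_one] at hw
  exact commutatorElement_eq_one_iff_mul_comm.mp hw


open Pointwise MulAction

lemma conjAct_smul_eq_iff {G : Type*} [Group G] {g : ConjAct G} {M : Subgroup G} :
    g • M = M ↔ ConjAct.ofConjAct g ∈ Subgroup.normalizer (M : Set G) := by
  constructor
  · intro hgM
    rw [Subgroup.mem_normalizer_iff]
    intro x
    constructor
    · intro hx
      have h2 : g • x ∈ g • M := Subgroup.smul_mem_pointwise_smul x g M hx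
      rwa [hgM, ConjAct.smul_def] at h2
    · intro hx
      have h2 : g • x ∈ g • M := by rwa [hgM, ConjAct.smul_def]
      rwa [Subgroup.smul_mem_pointwise_smul_iff] at h2
  · intro ha
    have ha' : (ConjAct.ofConjAct g)⁻¹ ∈ Subgroup.normalizer (M : Set G) := inv_mem ha
    ext x
    rw [Subgroup.mem_pointwise_smul_iff_inv_smul_mem, ConjAct.smul_def, map_inv, inv_inv]
    rw [Subgroup.mem_normalizer_iff] at ha'
    simpa [inv_inv] using (ha' x).symm

lemma smul_top_eq {G : Type*} [Group G] (g : ConjAct G) : g • (⊤ : Subgroup G) = ⊤ := by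
  ext x
  simp [Subgroup.mem_pointwise_smul_iff_inv_smul_mem]

lemma isCoatom_smul {G : Type*} [Group G] {M : Subgroup G} (hM : IsCoatom M) (g : ConjAct G) :
    IsCoatom (g • M) := by
  constructor
  · intro htop
    have := congrArg (fun S => g⁻¹ • S) htop
    simp only [inv_smul_smul, smul_top_eq] at this
    exact hM.1 this
  · intro b hb
    have h1 : M < g⁻¹ • b := by
      apply lt_of_le_of_ne
      · intro x hx
        rw [Subgroup.mem_pointwise_smul_iff_inv_smul_mem, inv_inv]
        exact hb.le (Subgroup.smul_mem_pointwise_smul x g M hx)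
      · intro heq
        apply hb.ne
        have := congrArg (fun S => g • S) heq
        simpa only [smul_inv_smul] using this
    have := hM.2 _ h1
    have := congrArg (fun S => g • S) this
    simpa only [smul_inv_smul, smul_top_eq] using this

lemma orbit_card_mul {G : Type*} [Group G] [Finite G] {M : Subgroup G}
    (hnorm : Subgroup.normalizer (M : Set G) = M) :
    Nat.card (orbit (ConjAct G) M) * Nat.card M = Nat.card G := by
  have h1 : Nat.card (orbit (ConjAct G) M) = (stabilizer (ConjAct G) M).index :=
    Nat.card_congr (orbitEquivQuotientStabilizer (ConjAct G) M)
  have e : M ≃ stabilizer (ConjAct G) M := by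
    refine (Equiv.subtypeEquiv ConjAct.toConjAct.toEquiv fun x => ?_)
    rw [MulAction.mem_stabilizer_iff, conjAct_smul_eq_iff, hnorm]
    simp
  have h2 : Nat.card (stabilizer (ConjAct G) M) = Nat.card M := (Nat.card_congr e).symm
  have h3 := Subgroup.card_mul_index (stabilizer (ConjAct G) M)
  have h4 : Nat.card (ConjAct G) = Nat.card G := Nat.card_congr ConjAct.ofConjAct.toEquiv
  rw [h1, ← h2, mul_comm, h3, h4]

lemma counting {G : Type*} [Group G] [Finite G]
    (hsimple : ∀ N : Subgroup G, N.Normal → N = ⊥ ∨ N = ⊤)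
    (hprop : ∀ H : Subgroup G, H ≠ ⊤ → ∀ a b : G, a ∈ H → b ∈ H → a * b = b * a)
    (hnab : ¬ ∀ a b : G, a * b = b * a) : False := by
  classical
  letI : Fintype G := Fintype.ofFinite G
  have hfinsub : Finite (Subgroup G) :=
    Finite.of_injective (fun H => (H : Set G)) SetLike.coe_injective
  -- trivial center
  have hZ : ∀ g : G, g ∈ Subgroup.center G → g = 1 := by
    rcases hsimple (Subgroup.center G) inferInstance with h | h
    · intro g hg; rw [h] at hg; exact hg
    · exfalso
      apply hnab
      intro a b
      have : a ∈ Subgroup.center G := h ▸ Subgroup.mem_top a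
      exact (Subgroup.mem_center_iff.mp this b).symm
  -- not cyclic
  have hcyc : ∀ g : G, Subgroup.zpowers g ≠ ⊤ := by
    intro g hg
    apply hnab
    intro a b
    obtain ⟨i, hi⟩ := (hg ▸ Subgroup.mem_top a : a ∈ Subgroup.zpowers g)
    obtain ⟨j, hj⟩ := (hg ▸ Subgroup.mem_top b : b ∈ Subgroup.zpowers g)
    rw [← hi, ← hj]
    exact (Commute.zpow_zpow_self g i j)
  -- each nontrivial element lies in a coatom
  have hcoatom : ∀ g : G, g ≠ 1 → ∃ M : Subgroup G, IsCoatom M ∧ g ∈ M := by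
    intro g hg
    rcases eq_top_or_exists_le_coatom (Subgroup.zpowers g) with h | ⟨M, hM, hle⟩
    · exact absurd h (hcyc g)
    · exact ⟨M, hM, hle (Subgroup.mem_zpowers g)⟩
  -- coatoms containing a common nontrivial element coincide
  have huniq : ∀ M₁ M₂ : Subgroup G, IsCoatom M₁ → IsCoatom M₂ →
      ∀ g, g ∈ M₁ → g ∈ M₂ → g ≠ 1 → M₁ = M₂ := by
    intro M₁ M₂ h₁ h₂ g hg₁ hg₂ hg
    by_contra hne
    have hcent : ∀ M : Subgroup G, IsCoatom M → g ∈ M → M ≤ Subgroup.centralizer {g} := by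
      intro M hM hgM m hm
      rw [Subgroup.mem_centralizer_iff]
      rintro y ⟨rfl⟩
      exact hprop M hM.1 _ _ hgM hm
    have hlt : M₁ < M₁ ⊔ M₂ := by
      rcases lt_or_eq_of_le (le_sup_left : M₁ ≤ M₁ ⊔ M₂) with h | h
      · exact h
      · exfalso
        have hle : M₂ ≤ M₁ := by rw [h]; exact le_sup_right
        rcases lt_or_eq_of_le hle with hlt | heq
        · exact h₁.1 (h₂.2 _ hlt)
        · exact hne heq.symm
    have hsup : M₁ ⊔ M₂ = ⊤ := h₁.2 _ hlt
    have hctop : Subgroup.centralizer {g} = ⊤ := by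
      apply top_le_iff.mp
      rw [← hsup]
      exact sup_le (hcent M₁ h₁ hg₁) (hcent M₂ h₂ hg₂)
    apply hg
    apply hZ
    rw [Subgroup.mem_center_iff]
    intro m
    have : m ∈ Subgroup.centralizer {g} := hctop ▸ Subgroup.mem_top m
    exact (Subgroup.mem_centralizer_iff.mp this g rfl).symm
  -- no coatom is ⊥
  have hbotnc : ∀ M : Subgroup G, IsCoatom M → M ≠ ⊥ := by
    rintro M hM rfl
    obtain ⟨a, hab⟩ := not_forall.mp hnab
    obtain ⟨b, hab⟩ := not_forall.mp hab
    have hg : ⁅a, b⁆ ≠ 1 := fun h => hab (commutatorElement_eq_one_iff_mul_comm.mp h)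
    have : Subgroup.zpowers ⁅a, b⁆ = ⊤ := by
      apply hM.2
      rw [bot_lt_iff_ne_bot]
      intro h
      exact hg (by simpa [Subgroup.zpowers_eq_bot] using h)
    exact hcyc _ this
  -- coatoms are self normalizing
  have hnorm : ∀ M : Subgroup G, IsCoatom M → Subgroup.normalizer (M : Set G) = M := by
    intro M hM
    have hne : Subgroup.normalizer (M : Set G) ≠ ⊤ := by
      intro h
      have : M.Normal := Subgroup.normalizer_eq_top_iff.mp h
      rcases hsimple M this with h' | h'
      · exact hbotnc M hM h'
      · exact hM.1 h'
    rcases lt_or_eq_of_le (Subgroup.le_normalizer (H := M)) with h | h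
    · exact absurd (hM.2 _ h) hne
    · exact h.symm
  -- finset of nontrivial elements of a subgroup
  have hFcard : ∀ H : Subgroup G, ((Set.toFinset (H : Set G)).erase 1).card + 1 = Nat.card H := by
    intro H
    rw [Finset.card_erase_of_mem (by rw [Set.mem_toFinset]; exact H.one_mem)]
    rw [Set.toFinset_card, ← Nat.card_eq_fintype_card, SetLike.coe_sort_coe]
    have : 1 ≤ Nat.card H := Nat.card_pos
    omega
  -- package the union of the orbit of a coatom
  have key : ∀ M : Subgroup G, IsCoatom M → ∃ U : Finset G,
      (∀ x, x ∈ U ↔ ∃ H ∈ orbit (ConjAct G) M, x ∈ H ∧ x ≠ 1) ∧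
      U.card + Nat.card (orbit (ConjAct G) M) = Nat.card G ∧
      2 ≤ Nat.card (orbit (ConjAct G) M) ∧
      2 * Nat.card (orbit (ConjAct G) M) ≤ Nat.card G := by
    intro M hM
    have hMne : M ≠ ⊥ := hbotnc M hM
    have hM2 : 2 ≤ Nat.card M := by
      rcases M.bot_or_exists_ne_one with h | ⟨x, hx, hx1⟩
      · exact absurd h hMne
      · exact Finite.one_lt_card_iff_nontrivial.mpr ⟨⟨x, hx⟩, 1, by simpa using hx1⟩
    have horb := orbit_card_mul (hnorm M hM)
    have horbfin : (orbit (ConjAct G) M).Finite := Set.toFinite _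
    set OF : Finset (Subgroup G) := horbfin.toFinset with hOF
    have hOFmem : ∀ H : Subgroup G, H ∈ OF ↔ H ∈ orbit (ConjAct G) M :=
      fun H => horbfin.mem_toFinset
    have hOFcard : OF.card = Nat.card (orbit (ConjAct G) M) := by
      rw [Nat.card_coe_set_eq, Set.ncard_eq_toFinset_card _ horbfin]
    have hcoat : ∀ H : Subgroup G, H ∈ OF → IsCoatom H := by
      intro H hH
      obtain ⟨g, rfl⟩ := (hOFmem H).mp hH
      exact isCoatom_smul hM g
    have hcards : ∀ H : Subgroup G, H ∈ OF → Nat.card H = Nat.card M := by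
      intro H hH
      obtain ⟨g, rfl⟩ := (hOFmem H).mp hH
      exact (Nat.card_congr (Subgroup.equivSMul g M).toEquiv).symm
    set U : Finset G := OF.biUnion (fun H => (Set.toFinset (H : Set G)).erase 1) with hU
    have hUmem : ∀ x, x ∈ U ↔ ∃ H ∈ orbit (ConjAct G) M, x ∈ H ∧ x ≠ 1 := by
      intro x
      rw [hU, Finset.mem_biUnion]
      constructor
      · rintro ⟨H, hH, hx⟩
        rw [Finset.mem_erase, Set.mem_toFinset] at hx
        exact ⟨H, (hOFmem H).mp hH, hx.2, hx.1⟩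
      · rintro ⟨H, hH, hx, hx1⟩
        exact ⟨H, (hOFmem H).mpr hH, by rw [Finset.mem_erase, Set.mem_toFinset]; exact ⟨hx1, hx⟩⟩
    have hdisj : ∀ H₁ ∈ OF, ∀ H₂ ∈ OF, H₁ ≠ H₂ →
        Disjoint ((Set.toFinset (H₁ : Set G)).erase 1) ((Set.toFinset (H₂ : Set G)).erase 1) := by
      intro H₁ h₁ H₂ h₂ hne
      rw [Finset.disjoint_left]
      intro x hx₁ hx₂
      rw [Finset.mem_erase, Set.mem_toFinset] at hx₁ hx₂
      exact hne (huniq H₁ H₂ (hcoat H₁ h₁) (hcoat H₂ h₂) x hx₁.2 hx₂.2 hx₁.1)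
    have hUcard : U.card + Nat.card (orbit (ConjAct G) M) = Nat.card G := by
      rw [hU, Finset.card_biUnion hdisj]
      have : ∀ H ∈ OF, ((Set.toFinset (H : Set G)).erase 1).card = Nat.card M - 1 := by
        intro H hH
        have := hFcard H
        rw [hcards H hH] at this
        omega
      rw [Finset.sum_congr rfl this, Finset.sum_const, smul_eq_mul, hOFcard]
      have h1M : 1 ≤ Nat.card M := Nat.card_pos
      rw [← horb, ← Nat.mul_succ]
      congr 1
      omega
    have hOne : Nonempty (orbit (ConjAct G) M) := ⟨⟨M, mem_orbit_self M⟩⟩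
    have hO1 : 1 ≤ Nat.card (orbit (ConjAct G) M) := Nat.card_pos
    have hO2 : 2 ≤ Nat.card (orbit (ConjAct G) M) := by
      rcases Nat.lt_or_ge (Nat.card (orbit (ConjAct G) M)) 2 with h | h
      · exfalso
        have h1 : Nat.card (orbit (ConjAct G) M) = 1 := by omega
        rw [h1, one_mul] at horb
        exact hM.1 (Subgroup.eq_top_of_card_eq M horb)
      · exact h
    refine ⟨U, hUmem, hUcard, hO2, ?_⟩
    calc 2 * Nat.card (orbit (ConjAct G) M)
        ≤ Nat.card M * Nat.card (orbit (ConjAct G) M) := Nat.mul_le_mul_right _ hM2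
      _ = Nat.card G := by rw [mul_comm]; exact horb
  -- choose the first coatom
  obtain ⟨a, hab'⟩ := not_forall.mp hnab
  obtain ⟨b, hab⟩ := not_forall.mp hab'
  have hg1 : ⁅a, b⁆ ≠ 1 := fun hc => hab (commutatorElement_eq_one_iff_mul_comm.mp hc)
  obtain ⟨M₁, hM₁, hgM₁⟩ := hcoatom _ hg1
  obtain ⟨U₁, hU₁mem, hU₁card, hO₁2, hO₁le⟩ := key M₁ hM₁
  -- there is a nontrivial element outside U₁
  have hcardG : 1 ≤ Nat.card G := Nat.card_pos
  have hEcard : (Finset.univ.erase (1 : G)).card = Nat.card G - 1 := by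
    rw [Finset.card_erase_of_mem (Finset.mem_univ 1), Finset.card_univ, Nat.card_eq_fintype_card]
  have hU₁sub : U₁ ⊆ Finset.univ.erase 1 := by
    intro x hx
    obtain ⟨H, _, _, hx1⟩ := (hU₁mem x).mp hx
    exact Finset.mem_erase.mpr ⟨hx1, Finset.mem_univ x⟩
  have hExU : ∃ g₂ : G, g₂ ≠ 1 ∧ g₂ ∉ U₁ := by
    by_contra hcon
    push_neg at hcon
    have hsub : Finset.univ.erase (1 : G) ⊆ U₁ := by
      intro x hx
      exact hcon x (Finset.mem_erase.mp hx).1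
    have := Finset.card_le_card hsub
    omega
  obtain ⟨g₂, hg₂1, hg₂U⟩ := hExU
  obtain ⟨M₂, hM₂, hgM₂⟩ := hcoatom g₂ hg₂1
  obtain ⟨U₂, hU₂mem, hU₂card, hO₂2, hO₂le⟩ := key M₂ hM₂
  -- U₁ and U₂ are disjoint
  have hdisj : Disjoint U₁ U₂ := by
    rw [Finset.disjoint_left]
    intro x hx₁ hx₂
    obtain ⟨H₁, hH₁, hxH₁, hx1⟩ := (hU₁mem x).mp hx₁
    obtain ⟨H₂, hH₂, hxH₂, -⟩ := (hU₂mem x).mp hx₂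
    obtain ⟨g, rfl⟩ := hH₁
    obtain ⟨g', hg'⟩ := hH₂
    have hc₁ : IsCoatom (g • M₁) := isCoatom_smul hM₁ g
    have hc₂ : IsCoatom H₂ := hg' ▸ isCoatom_smul hM₂ g'
    have heq : g • M₁ = H₂ := huniq _ _ hc₁ hc₂ x hxH₁ hxH₂ hx1
    -- then M₂ ∈ orbit M₁, hence g₂ ∈ U₁
    have hM₂orb : M₂ ∈ orbit (ConjAct G) M₁ := by
      have h1 : H₂ ∈ orbit (ConjAct G) M₁ := heq ▸ mem_orbit M₁ g
      have h2 : H₂ ∈ orbit (ConjAct G) M₂ := hg' ▸ mem_orbit M₂ g'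
      have h3 : orbit (ConjAct G) H₂ = orbit (ConjAct G) M₁ := by
        rw [orbit_eq_iff]; exact h1
      have h4 : orbit (ConjAct G) H₂ = orbit (ConjAct G) M₂ := by
        rw [orbit_eq_iff]; exact h2
      rw [← h3, h4]
      exact mem_orbit_self M₂
    exact hg₂U ((hU₁mem g₂).mpr ⟨M₂, hM₂orb, hgM₂, hg₂1⟩)
  -- final count
  have hunion : (U₁ ∪ U₂).card = U₁.card + U₂.card := Finset.card_union_of_disjoint hdisj
  have hsub : U₁ ∪ U₂ ⊆ Finset.univ.erase 1 := by
    intro x hx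
    rcases Finset.mem_union.mp hx with h | h
    · exact hU₁sub h
    · obtain ⟨H, _, _, hx1⟩ := (hU₂mem x).mp h
      exact Finset.mem_erase.mpr ⟨hx1, Finset.mem_univ x⟩
  have hle := Finset.card_le_card hsub
  omega

lemma subgroup_card_lt {G : Type*} [Group G] [Finite G] {H : Subgroup G} (h : H ≠ ⊤) :
    Nat.card H < Nat.card G := by
  have hss : (H : Set G) ⊂ Set.univ := by
    rw [Set.ssubset_univ_iff]
    intro heq
    exact h (SetLike.coe_injective (by rw [heq]; rfl))
  have h1 : Nat.card H = (H : Set G).ncard := by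
    rw [← SetLike.coe_sort_coe, Nat.card_coe_set_eq]
  have h2 : Nat.card G = (Set.univ : Set G).ncard := by rw [Set.ncard_univ]
  rw [h1, h2]
  exact Set.ncard_lt_ncard hss Set.finite_univ

lemma quotient_card_lt {G : Type*} [Group G] [Finite G] {N : Subgroup G} [N.Normal]
    (h : N ≠ ⊥) : Nat.card (G ⧸ N) < Nat.card G := by
  have h2 : 2 ≤ Nat.card N := by
    rcases N.bot_or_exists_ne_one with h' | ⟨x, hx, hx1⟩
    · exact absurd h' h
    · exact Finite.one_lt_card_iff_nontrivial.mpr ⟨⟨x, hx⟩, 1, by simpa using hx1⟩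
  have heq := Subgroup.card_eq_card_quotient_mul_card_subgroup N
  have hq : 1 ≤ Nat.card (G ⧸ N) := Nat.card_pos
  nlinarith

universe u

lemma main_aux : ∀ (N : ℕ) (G : Type u) [Group G] [Finite G], Nat.card G ≤ N →
    ∀ (d n h : ℕ), h % 10 = 1 → (∀ x y : G, wo d n h x y = 1) →
    ∀ a b : G, a * b = b * a := by
  intro N
  induction N with
  | zero =>
      intro G _ _ hcard
      exact absurd hcard (by have : 1 ≤ Nat.card G := Nat.card_pos; omega)
  | succ N ih =>
      intro G _ _ hcard d n h hh hlaw
      by_cases habel : ∀ a b : G, a * b = b * a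
      · exact habel
      exfalso
      by_cases hK : commutator G = ⊤
      · -- G is perfect; show it is simple with all proper subgroups abelian, contradiction
        apply counting ?_ ?_ habel
        · -- simple
          intro N' hnorm'
          by_contra hcon
          push_neg at hcon
          obtain ⟨hD1, hD2⟩ := hcon
          have hqlt : Nat.card (G ⧸ N') ≤ N := by
            have := quotient_card_lt hD1
            omega
          have hqab := ih (G ⧸ N') hqlt d n h hh (law_quotient d n h hlaw N')
          have hle : commutator G ≤ N' := by
            rw [commutator_def, Subgroup.commutator_le]
            intro g₁ _ g₂ _
            rw [← QuotientGroup.eq_one_iff]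
            have : ((⁅g₁, g₂⁆ : G) : G ⧸ N') = ⁅(g₁ : G ⧸ N'), (g₂ : G ⧸ N')⁆ := by
              simp [commutatorElement_def]
            rw [this, commutatorElement_eq_one_iff_mul_comm]
            exact hqab _ _
          rw [hK] at hle
          exact hD2 (top_le_iff.mp hle)
        · -- proper subgroups abelian
          intro H hne a b ha hb
          have hlt : Nat.card H ≤ N := by
            have := subgroup_card_lt hne
            omega
          have := ih H hlt d n h hh (law_subgroup d n h hlaw H) ⟨a, ha⟩ ⟨b, hb⟩
          exact congrArg Subtype.val this
      · -- commutator subgroup is proper, hence abelian, so G is metabelian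
        apply habel
        have hlt : Nat.card (commutator G) ≤ N := by
          have := subgroup_card_lt hK
          omega
        have hKab := ih (commutator G) hlt d n h hh (law_subgroup d n h hlaw _)
        exact abelian_of_metabelian d n h hh
          (fun a b ha hb => congrArg Subtype.val (hKab ⟨a, ha⟩ ⟨b, hb⟩)) hlaw

/-- Every finite group in which the word `w_o` is a law is abelian. -/
theorem stmt6 {G : Type*} [Group G] [Finite G] (d n h : ℕ) (hd : 0 < d) (hn : 0 < n)
    (hh : h % 10 = 1) (hlaw : ∀ x y : G, wo d n h x y = 1) :
    ∀ a b : G, a * b = b * a :=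
  main_aux (Nat.card G) G le_rfl d n h hh hlaw
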